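/- Let δ,γ ∈ ℕ⁺ and ρ ∈ ℕ∪{0}, and let (T,u) be a (δγ,ρ)-regular rooted tree. Let I be a nonempty set with |I| ≤ γ and let Φ : N^ρ_T(u) → I be a function. Then there exist i ∈ I and a (δ,ρ)-regular rooted subtree (T',u) of (T,u) (in particular N^ρ_{T'}(u) ⊆ N^ρ_T(u)) such that Φ(v) = i for every v ∈ N^ρ_{T'}(u). -/

import Mathlib

/-- The induced subgraph of `G` on `S` is nonempty and connected, expressed via
walks of `G` staying inside `S`. -/
def ConnectedIn {V : Type*} (G : SimpleGraph V) (S : Set V) : Prop :=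
  S.Nonempty ∧ ∀ a ∈ S, ∀ b ∈ S, ∃ w : G.Walk a b, ∀ v ∈ w.support, v ∈ S

/-- An induced `H`-model in `G`: pairwise disjoint nonempty connected branch sets,
joined by an edge iff the corresponding vertices of `H` are adjacent. -/
def IsInducedModel {W V : Type*} (H : SimpleGraph W) (G : SimpleGraph V) (X : W → Set V) : Prop :=
  (∀ w, ConnectedIn G (X w)) ∧
  (∀ w w', w ≠ w' → Disjoint (X w) (X w')) ∧
  (∀ w w', H.Adj w w' → ∃ a ∈ X w, ∃ b ∈ X w', G.Adj a b) ∧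
  (∀ w w', w ≠ w' → ¬ H.Adj w w' → ∀ a ∈ X w, ∀ b ∈ X w', ¬ G.Adj a b)

/-- `G` has an induced minor isomorphic to `H`. -/
def InducedMinor {W V : Type*} (H : SimpleGraph W) (G : SimpleGraph V) : Prop :=
  ∃ X : W → Set V, IsInducedModel H G X

/-- An `H`-model in `G` (for the minor relation). -/
def IsMinorModel {W V : Type*} (H : SimpleGraph W) (G : SimpleGraph V) (X : W → Set V) : Prop :=
  (∀ w, ConnectedIn G (X w)) ∧
  (∀ w w', w ≠ w' → Disjoint (X w) (X w')) ∧
  (∀ w w', H.Adj w w' → ∃ a ∈ X w, ∃ b ∈ X w', G.Adj a b)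

/-- `G` has a minor isomorphic to `H`. -/
def HasMinor {W V : Type*} (H : SimpleGraph W) (G : SimpleGraph V) : Prop :=
  ∃ X : W → Set V, IsMinorModel H G X

/-- `(T, β)` is a tree decomposition of `G`. -/
structure IsTreeDecomp {V ι : Type*} (G : SimpleGraph V) (T : SimpleGraph ι)
    (β : ι → Finset V) : Prop where
  tree : T.IsTree
  bags_connected : ∀ v : V, ConnectedIn T {i | v ∈ β i}
  edges_covered : ∀ u v : V, G.Adj u v → ∃ i, u ∈ β i ∧ v ∈ β i

/-- `G` has a tree decomposition of width at most `w`. -/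
def TreewidthLE {V : Type*} (G : SimpleGraph V) (w : ℕ) : Prop :=
  ∃ (n : ℕ) (T : SimpleGraph (Fin n)) (β : Fin n → Finset V),
    IsTreeDecomp G T β ∧ ∀ i, (β i).card ≤ w + 1

noncomputable def treewidth {V : Type*} (G : SimpleGraph V) : ℕ :=
  sInf {w | TreewidthLE G w}

/-- `G` has a path decomposition of width at most `w`. -/
def PathwidthLE {V : Type*} (G : SimpleGraph V) (w : ℕ) : Prop :=
  ∃ (n : ℕ) (β : Fin n → Finset V),
    IsTreeDecomp G (SimpleGraph.pathGraph n) β ∧ ∀ i, (β i).card ≤ w + 1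

noncomputable def pathwidth {V : Type*} (G : SimpleGraph V) : ℕ :=
  sInf {w | PathwidthLE G w}

/-- A hereditary class of finite graphs (each finite graph is represented, up to
isomorphism, on some `Fin n`): the class is closed under induced subgraphs,
i.e. under pulling back along injections. -/
def Hereditary (𝒢 : ∀ n : ℕ, SimpleGraph (Fin n) → Prop) : Prop :=
  ∀ (n m : ℕ) (G : SimpleGraph (Fin n)) (f : Fin m ↪ Fin n),
    𝒢 n G → 𝒢 m (G.comap ⇑f)

/-- A graph `J` is `ζ`-jagged if every induced subgraph with pathwidth at least 3
has at least `ζ` vertices of degree two (in that induced subgraph). -/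
def Jagged {V : Type*} (ζ : ℕ) (J : SimpleGraph V) : Prop :=
  ∀ s : Set V, 3 ≤ pathwidth (J.induce s) →
    ζ ≤ {v | v ∈ s ∧ ({w | w ∈ s ∧ J.Adj v w}).ncard = 2}.ncard

/-- A graph is `d`-degenerate if every nonempty induced subgraph has a vertex of
degree at most `d`. -/
def Degenerate {V : Type*} (d : ℕ) (G : SimpleGraph V) : Prop :=
  ∀ s : Set V, s.Nonempty → ∃ v ∈ s, ({w | w ∈ s ∧ G.Adj v w}).ncard ≤ d

/-- The complete binary tree of radius `ρ`: vertices are binary strings of length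
at most `ρ`, and `x` is adjacent to `b :: x` (its children). -/
def binTree (ρ : ℕ) : SimpleGraph {l : List Bool // l.length ≤ ρ} where
  Adj x y := (∃ b : Bool, (x : List Bool) = b :: (y : List Bool)) ∨
             (∃ b : Bool, (y : List Bool) = b :: (x : List Bool))
  symm := by constructor; rintro x y (h | h); exact Or.inr h; exact Or.inl h
  loopless := by
    constructor
    rintro x (⟨b, hb⟩ | ⟨b, hb⟩) <;>
      · have := congrArg List.length hb
        simp at this

/-- The `n × n` square grid graph. -/
def gridGraph (n : ℕ) : SimpleGraph (Fin n × Fin n) where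
  Adj p q := (p.1 = q.1 ∧ ((p.2 : ℕ) + 1 = (q.2 : ℕ) ∨ (q.2 : ℕ) + 1 = (p.2 : ℕ))) ∨
             (p.2 = q.2 ∧ ((p.1 : ℕ) + 1 = (q.1 : ℕ) ∨ (q.1 : ℕ) + 1 = (p.1 : ℕ)))
  symm := by
    constructor
    rintro p q (⟨h1, h2⟩ | ⟨h1, h2⟩)
    · exact Or.inl ⟨h1.symm, h2.symm⟩
    · exact Or.inr ⟨h1.symm, h2.symm⟩
  loopless := by constructor; rintro p (⟨_, h | h⟩ | ⟨_, h | h⟩) <;> omega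

/-- A graph is planar iff it is isomorphic to a minor of some square grid. -/
def IsPlanar {W : Type*} (H : SimpleGraph W) : Prop :=
  ∃ n : ℕ, HasMinor H (gridGraph n)

/-- `S` is the vertex set of an induced path in `G` from `x` to `y`. -/
def IsInducedPathSet {V : Type*} (G : SimpleGraph V) (S : Set V) (x y : V) : Prop :=
  ∃ p : G.Walk x y, p.IsPath ∧ {v | v ∈ p.support} = S ∧
    ∀ u v : V, u ∈ p.support → v ∈ p.support → G.Adj u v → p.toSubgraph.Adj u v

/-- `G` has a stable strong `(κ, lam)`-block: a stable set `B` of at least `κ`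
vertices together with, for each unordered pair of distinct vertices of `B`,
at least `lam` pairwise internally disjoint induced paths joining them, such that
path systems of distinct pairs meet exactly in the shared endpoints. -/
def HasStableStrongBlock {V : Type*} (G : SimpleGraph V) (κ lam : ℕ) : Prop :=
  ∃ (B : Set V) (P : V → V → Fin lam → Set V),
    κ ≤ B.ncard ∧
    (∀ x ∈ B, ∀ y ∈ B, x ≠ y → ¬ G.Adj x y) ∧
    (∀ x ∈ B, ∀ y ∈ B, x ≠ y →
      (∀ i, IsInducedPathSet G (P x y i) x y) ∧
      (∀ i j, i ≠ j → ∀ v, v ∈ P x y i → v ∈ P x y j → v = x ∨ v = y) ∧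
      (∀ i, P x y i = P y x i)) ∧
    (∀ x ∈ B, ∀ y ∈ B, ∀ x' ∈ B, ∀ y' ∈ B, x ≠ y → x' ≠ y' →
      ({x, y} : Set V) ≠ {x', y'} →
      (⋃ i, P x y i) ∩ (⋃ i, P x' y' i) = (({x, y} : Set V) ∩ {x', y'}))

/-- `G` is `(κ, lam)`-separable: there is no stable strong `(κ, lam)`-block in `G`. -/
def Separable {V : Type*} (G : SimpleGraph V) (κ lam : ℕ) : Prop :=
  ¬ HasStableStrongBlock G κ lam

/-- In the tree `T` rooted at `u`, `w` is a child of `v`. -/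
def IsChild {α : Type*} (T : SimpleGraph α) (u v w : α) : Prop :=
  T.Adj v w ∧ T.dist u w = T.dist u v + 1

/-- `(T, u)` is a `(δ, ρ)`-regular rooted tree: `T` is a tree, every vertex is at
distance at most `ρ` from `u`, and every vertex at distance less than `ρ` from `u`
has exactly `δ` children. -/
def RootedRegular {α : Type*} (T : SimpleGraph α) (u : α) (δ ρ : ℕ) : Prop :=
  T.IsTree ∧ (∀ v, T.dist u v ≤ ρ) ∧
    ∀ v, T.dist u v < ρ → {w | IsChild T u v w}.ncard = δ

/-- The rooted tree induced by `T` on `s`, with root `r`, is a rooted subtree of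
`(T, u)`: it is a tree and every child relation in it is a child relation in `(T, u)`. -/
def IsRootedSubtree {α : Type*} (T : SimpleGraph α) (u : α) (s : Set α) (r : ↥s) : Prop :=
  (T.induce s).IsTree ∧
    ∀ v w : ↥s, IsChild (T.induce s) r v w → IsChild T u (↑v) (↑w)

open Classical in
/-- The `i`-ancestor of `v` in the tree `T` rooted at `u`: the vertex on the unique
`u`–`v` path at distance `i` from `v`. -/
noncomputable def ancestor {α : Type*} (T : SimpleGraph α) (u v : α) (i : ℕ) : α :=
  if h : ∃ w, T.dist u w + i = T.dist u v ∧ T.dist w v = i then h.choose else v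

/-- The rooted tree `T` (mapped into `G` by `f`) is path-uniform in `G`. -/
def PathUniform {V β : Type*} (G : SimpleGraph V) (f : β → V) (T : SimpleGraph β)
    (r : β) (ρ : ℕ) : Prop :=
  ∀ v v' : β, T.dist r v = ρ → T.dist r v' = ρ → ∀ i j : ℕ, i ≤ ρ → j ≤ ρ →
    (G.Adj (f (ancestor T r v i)) (f (ancestor T r v j)) ↔
      G.Adj (f (ancestor T r v' i)) (f (ancestor T r v' j)))

/-- The rooted tree `T` (mapped into `G` by `f`) is path-induced in `G`. -/
def PathInduced {V β : Type*} (G : SimpleGraph V) (f : β → V) (T : SimpleGraph β)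
    (r : β) (ρ : ℕ) : Prop :=
  ∀ v : β, T.dist r v = ρ → ∀ i j : ℕ, i ≤ ρ → j ≤ ρ →
    (G.Adj (f (ancestor T r v i)) (f (ancestor T r v j)) ↔ (i + 1 = j ∨ j + 1 = i))

/-- The rooted tree `T` (mapped into `G` by `f`) is branch-induced in `G`: every
`G`-edge between vertices of `T` that is not a `T`-edge joins a vertex to one of
its ancestors. -/
def BranchInduced {V β : Type*} (G : SimpleGraph V) (f : β → V) (T : SimpleGraph β)
    (r : β) : Prop :=
  ∀ v w : β, G.Adj (f v) (f w) → ¬ T.Adj v w →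
    (T.dist r v + T.dist v w = T.dist r w ∨ T.dist r w + T.dist w v = T.dist r v)

/-- `G` has a (not necessarily induced) subgraph isomorphic to `H`. -/
def HasSubgraphIso {W V : Type*} (H : SimpleGraph W) (G : SimpleGraph V) : Prop :=
  ∃ f : W → V, Function.Injective f ∧ ∀ a b, H.Adj a b → G.Adj (f a) (f b)

/-- The spanning subgraph of `G` consisting of the edges of color `i` under the
edge-coloring `F`. -/
def colorSub {V : Type*} {c : ℕ} (G : SimpleGraph V) (F : V → V → Fin c) (i : Fin c) :
    SimpleGraph V where
  Adj u v := G.Adj u v ∧ F u v = i ∧ F v u = i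
  symm := by constructor; rintro u v ⟨h1, h2, h3⟩; exact ⟨h1.symm, h3, h2⟩
  loopless := by constructor; rintro u ⟨h, _, _⟩; exact G.ne_of_adj h rfl

/-- Distance from `a` to `b` within the induced subgraph `G[S]` (via walks of `G`
all of whose vertices lie in `S`). -/
noncomputable def distIn {V : Type*} (G : SimpleGraph V) (S : Set V) (a b : V) : ℕ :=
  sInf {n | ∃ w : G.Walk a b, w.length = n ∧ ∀ v ∈ w.support, v ∈ S}

/-- `(a 0, …, a (σ+1))` is a `(σ, θ)`-`X`-abyss in `G`. -/
def IsAbyss {V : Type*} (G : SimpleGraph V) (X : Set V) (σ θ : ℕ) (a : ℕ → V) : Prop :=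
  ∃ (S : ℕ → Set V) (ρ : ℕ → ℕ),
    S 0 ⊆ X ∧ ConnectedIn G (S 0) ∧ (∀ k ≤ σ + 1, a k ∈ S 0) ∧
    (∀ i < σ,
      S (i + 1) ⊆ {v | v ∈ S i ∧ distIn G (S i) (a i) v = ρ i + 1} ∧
      ConnectedIn G (S (i + 1)) ∧
      ∀ k, i + 1 ≤ k → k ≤ σ + 1 → a k ∈ S (i + 1)) ∧
    θ ≤ G.dist (a σ) (a (σ + 1))

/-- The torso of a tree decomposition `(T, β)` of `G` at the node `x`. -/
def torso {V ι : Type*} (G : SimpleGraph V) (T : SimpleGraph ι) (β : ι → Finset V)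
    (x : ι) : SimpleGraph {v : V // v ∈ β x} where
  Adj u v := u ≠ v ∧ (G.Adj ↑u ↑v ∨ ∃ y, T.Adj x y ∧ ↑u ∈ β y ∧ ↑v ∈ β y)
  symm := by
    constructor
    rintro u v ⟨hne, h | ⟨y, hy, h1, h2⟩⟩
    · exact ⟨hne.symm, Or.inl h.symm⟩
    · exact ⟨hne.symm, Or.inr ⟨y, hy, h2, h1⟩⟩
  loopless := by constructor; rintro u ⟨hne, _⟩; exact hne rfl

/-- The vertex set of the component of `T - x` containing `y` (denoted `T_{y∖x}`). -/
def compAway {ι : Type*} (T : SimpleGraph ι) (y x : ι) : Set ι :=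
  {z | ∃ w : T.Walk y z, x ∉ w.support}

/-- A tree decomposition `(T, β)` of `G` is tight. -/
def Tight {V ι : Type*} (G : SimpleGraph V) (T : SimpleGraph ι) (β : ι → Finset V) : Prop :=
  ∀ x y, T.Adj x y →
    ∃ v₀ ∈ (⋃ z ∈ compAway T y x, (β z : Set V)) \ (⋃ z ∈ compAway T x y, (β z : Set V)),
      ∀ u : V, u ∈ β x → u ∈ β y →
        ∃ c : V, G.Adj u c ∧ ∃ w : G.Walk v₀ c, ∀ p ∈ w.support,
          p ∈ (⋃ z ∈ compAway T y x, (β z : Set V)) \ (⋃ z ∈ compAway T x y, (β z : Set V))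

/-- `G` has a subgraph isomorphic to some subdivision of the complete graph `K_μ`:
equivalently, there are `μ` branch vertices joined by pairwise internally disjoint
paths of nonzero length. -/
def HasKSubdivision {V : Type*} (μ : ℕ) (G : SimpleGraph V) : Prop :=
  ∃ b : Fin μ → V, Function.Injective b ∧
    ∃ P : ∀ i j : Fin μ, i < j → G.Walk (b i) (b j),
      (∀ i j (h : i < j), (P i j h).IsPath) ∧
      (∀ i j (h : i < j), ∀ m : Fin μ, b m ∈ (P i j h).support → m = i ∨ m = j) ∧
      (∀ i j (h : i < j), ∀ k l (h' : k < l), (i, j) ≠ (k, l) →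
        ∀ v : V, v ∈ (P i j h).support → v ∈ (P k l h').support →
          (v = b i ∨ v = b j) ∧ (v = b k ∨ v = b l))


section Statement7Aux

open SimpleGraph

variable {α : Type} [DecidableEq α] (T : SimpleGraph α) (u : α)

/-- Every vertex at positive distance has a parent. -/
lemma exists_parent (hc : T.Connected) {v : α} {d : ℕ} (hd : T.dist u v = d + 1) :
    ∃ p, T.dist u p = d ∧ IsChild T u p v := by
  obtain ⟨q, hq⟩ := (hc u v).exists_walk_length_eq_dist
  rw [hd] at hq
  rcases r : q.reverse with _ | ⟨hadj, q'⟩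
  · have := congrArg SimpleGraph.Walk.length r
    simp [hq] at this
  · -- hadj : T.Adj v p, q' : T.Walk p u
    rename_i p
    have hlen : q'.length = d := by
      have := congrArg SimpleGraph.Walk.length r
      simp [hq] at this
      omega
    have h1 : T.dist u p ≤ d := by
      have := SimpleGraph.dist_le q'.reverse
      simpa [hlen] using this
    have h2 : d + 1 ≤ T.dist u p + 1 := by
      rw [← hd]
      calc T.dist u v ≤ T.dist u p + T.dist p v := hc.dist_triangle
        _ ≤ T.dist u p + 1 := by
            have : T.dist p v = 1 := SimpleGraph.dist_eq_one_iff_adj.2 hadj.symm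
            omega
    have hdp : T.dist u p = d := by omega
    exact ⟨p, hdp, hadj.symm, by omega⟩

/-- Vertices on a distance-realizing walk have distance at most the length. -/
lemma dist_le_of_mem_support {x y z : α} (q : T.Walk x y) (hz : z ∈ q.support) :
    T.dist x z ≤ q.length := by
  calc T.dist x z ≤ (q.takeUntil z hz).length := SimpleGraph.dist_le _
    _ ≤ q.length := SimpleGraph.Walk.length_takeUntil_le q hz

/-- Parents are unique in a tree. -/
lemma parent_unique (ht : T.IsTree) {p q v : α} (hp : IsChild T u p v)
    (hq : IsChild T u q v) : p = q := by
  have hc := ht.isConnected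
  obtain ⟨P, hPp, hPl⟩ := (hc u p).exists_path_of_dist
  obtain ⟨Q, hQp, hQl⟩ := (hc u q).exists_path_of_dist
  have hdq : T.dist u q = T.dist u p := by
    have := hp.2; have := hq.2; omega
  have hvP : v ∉ P.support := by
    intro hv
    have := dist_le_of_mem_support T P hv
    rw [hPl] at this
    have := hp.2
    omega
  have hvQ : v ∉ Q.support := by
    intro hv
    have := dist_le_of_mem_support T Q hv
    rw [hQl, hdq] at this
    have := hp.2
    omega
  have hP' : (SimpleGraph.Walk.cons hp.1.symm P.reverse).IsPath :=
    hPp.reverse.cons (by simpa using hvP)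
  have hQ' : (SimpleGraph.Walk.cons hq.1.symm Q.reverse).IsPath :=
    hQp.reverse.cons (by simpa using hvQ)
  have heq : SimpleGraph.Walk.cons hp.1.symm P.reverse = SimpleGraph.Walk.cons hq.1.symm Q.reverse := by
    obtain ⟨w, -, hw⟩ := ht.existsUnique_path v u
    rw [hw _ hP', hw _ hQ']
  have hsupp := congrArg SimpleGraph.Walk.support heq
  rw [SimpleGraph.Walk.support_cons, SimpleGraph.Walk.support_cons,
    SimpleGraph.Walk.support_eq_cons P.reverse, SimpleGraph.Walk.support_eq_cons Q.reverse]
    at hsupp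
  simp only [List.cons.injEq] at hsupp
  exact hsupp.2.1

end Statement7Aux

open SimpleGraph Classical in
/-- The finset of children of `v`. -/
noncomputable def childFinset {α : Type} [Fintype α] (T : SimpleGraph α) (u v : α) :
    Finset α :=
  Set.toFinset {w | IsChild T u v w}

open Classical in
/-- Recursive coloring: `g` is the remaining depth. -/
noncomputable def auxColor {α I : Type} [Fintype α] (T : SimpleGraph α) (u : α) (δ : ℕ)
    (Φ : α → I) : ℕ → α → I
  | 0, v => Φ v
  | (g+1), v =>
    if h : ∃ i : I,
        δ ≤ ((childFinset T u v).filter (fun w => auxColor T u δ Φ g w = i)).card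
    then h.choose else Φ v

/-- The color of a vertex. -/
noncomputable def colorOf {α I : Type} [Fintype α] (T : SimpleGraph α) (u : α) (δ ρ : ℕ)
    (Φ : α → I) (v : α) : I :=
  auxColor T u δ Φ (ρ - T.dist u v) v

open Classical in
/-- Chosen set of `δ` children all carrying the color of `v`. -/
noncomputable def chChoice {α I : Type} [Fintype α] (T : SimpleGraph α) (u : α) (δ ρ : ℕ)
    (Φ : α → I) (v : α) : Finset α :=
  if h : ∃ C : Finset α, C ⊆ childFinset T u v ∧ C.card = δ ∧
      ∀ w ∈ C, colorOf T u δ ρ Φ w = colorOf T u δ ρ Φ v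
  then h.choose else ∅

lemma chChoice_spec {α I : Type} [Fintype α] {T : SimpleGraph α} {u : α} {δ ρ : ℕ}
    {Φ : α → I} {v w : α} (hw : w ∈ chChoice T u δ ρ Φ v) :
    IsChild T u v w ∧ colorOf T u δ ρ Φ w = colorOf T u δ ρ Φ v := by
  classical
  rw [chChoice] at hw
  split at hw
  · next h =>
      obtain ⟨h1, h2, h3⟩ := h.choose_spec
      have := h1 hw
      rw [childFinset, Set.mem_toFinset] at this
      exact ⟨this, h3 w hw⟩
  · simp at hw

/-- The vertex set generated from `u` by repeatedly taking chosen children. -/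
inductive TMem {α : Type} (Ch : α → Finset α) (u : α) : α → Prop
  | root : TMem Ch u u
  | child {v w : α} : TMem Ch u v → w ∈ Ch v → TMem Ch u w

/-- In a `(δγ, ρ)`-regular rooted tree, for any coloring of the vertices at
distance `ρ` from the root by at most `γ` colors, some `(δ, ρ)`-regular rooted subtree
(with the same root) has all its vertices at distance `ρ` from the root of one color. -/
theorem statement7 {α : Type} [Fintype α] (δ γ : ℕ) (hδ : 1 ≤ δ) (hγ : 1 ≤ γ) (ρ : ℕ)
    (T : SimpleGraph α) (u : α) (hreg : RootedRegular T u (δ * γ) ρ)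
    (I : Type) [Finite I] [Nonempty I] (hI : Nat.card I ≤ γ) (Φ : α → I) :
    ∃ (i : I) (s : Set α) (hu : u ∈ s),
      IsRootedSubtree T u s ⟨u, hu⟩ ∧
      RootedRegular (T.induce s) ⟨u, hu⟩ δ ρ ∧
      (∀ v : ↥s, (T.induce s).dist ⟨u, hu⟩ v = ρ → T.dist u ↑v = ρ) ∧
      (∀ v : ↥s, (T.induce s).dist ⟨u, hu⟩ v = ρ → Φ ↑v = i) := by
  classical
  haveI : Fintype I := Fintype.ofFinite I
  obtain ⟨htree, hle, hcnt⟩ := hreg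
  obtain ⟨hconnT, hacycT⟩ := htree
  set c := colorOf T u δ ρ Φ with hc
  -- cardinality of the child finset
  have hchildcard : ∀ v, T.dist u v < ρ → (childFinset T u v).card = δ * γ := by
    intro v hv
    have h := hcnt v hv
    rw [Set.ncard_eq_toFinset_card'] at h
    rw [childFinset, ← h]
  -- pigeonhole
  have hex : ∀ v, T.dist u v < ρ → ∃ i : I,
      δ ≤ ((childFinset T u v).filter
        (fun w => auxColor T u δ Φ (ρ - T.dist u v - 1) w = i)).card := by
    intro v hv
    have h := Finset.exists_le_card_fiber_of_mul_le_card_of_maps_to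
      (s := childFinset T u v) (t := (Finset.univ : Finset I)) (n := δ)
      (f := fun w => auxColor T u δ Φ (ρ - T.dist u v - 1) w)
      (fun a _ => Finset.mem_univ _) Finset.univ_nonempty ?_
    · obtain ⟨i, -, hi⟩ := h
      exact ⟨i, hi⟩
    · rw [hchildcard v hv]
      calc Finset.univ.card * δ = Nat.card I * δ := by rw [Nat.card_eq_fintype_card]; rfl
        _ ≤ γ * δ := Nat.mul_le_mul_right δ hI
        _ = δ * γ := Nat.mul_comm γ δ
  -- many children share the color of `v`
  have hcspec : ∀ v, T.dist u v < ρ →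
      δ ≤ ((childFinset T u v).filter (fun w => c w = c v)).card := by
    intro v hv
    have hg : ρ - T.dist u v = (ρ - T.dist u v - 1) + 1 := by omega
    have hcv : c v = auxColor T u δ Φ ((ρ - T.dist u v - 1) + 1) v := by
      rw [hc, colorOf, ← hg]
    rw [auxColor, dif_pos (hex v hv)] at hcv
    have hspec := (hex v hv).choose_spec
    rw [← hcv] at hspec
    have hfe : (childFinset T u v).filter
          (fun w => auxColor T u δ Φ (ρ - T.dist u v - 1) w = c v)
        = (childFinset T u v).filter (fun w => c w = c v) := by
      apply Finset.filter_congr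
      intro w hw
      have hwchild : IsChild T u v w := by
        rwa [childFinset, Set.mem_toFinset] at hw
      have hcw : c w = auxColor T u δ Φ (ρ - T.dist u v - 1) w := by
        rw [hc, colorOf, hwchild.2, Nat.sub_add_eq]
      rw [hcw]
    rwa [hfe] at hspec
  -- the chosen children sets
  have hch_card : ∀ v, T.dist u v < ρ → (chChoice T u δ ρ Φ v).card = δ := by
    intro v hv
    obtain ⟨t, ht, htc⟩ := Finset.exists_subset_card_eq (hcspec v hv)
    have hxx : ∃ C : Finset α, C ⊆ childFinset T u v ∧ C.card = δ ∧
        ∀ w ∈ C, colorOf T u δ ρ Φ w = colorOf T u δ ρ Φ v := by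
      refine ⟨t, fun w hw => Finset.filter_subset _ _ (ht hw), htc, fun w hw => ?_⟩
      have := ht hw
      rw [Finset.mem_filter] at this
      exact this.2
    rw [chChoice, dif_pos hxx]
    exact hxx.choose_spec.2.1
  have hleaf : ∀ v, T.dist u v = ρ → c v = Φ v := by
    intro v hv
    rw [hc, colorOf, hv, Nat.sub_self, auxColor]
  set Ch := chChoice T u δ ρ Φ with hCh
  set s : Set α := {v | TMem Ch u v} with hs
  have hus : u ∈ s := TMem.root
  have hmemcolor : ∀ v, v ∈ s → c v = c u := by
    intro v hv
    induction hv with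
    | root => rfl
    | child hv hw ih =>
        have h2 := (chChoice_spec hw).2
        rw [hc, h2, ← hc, ih]
  -- walks inside `s` realizing the distance
  have key : ∀ v, TMem Ch u v → ∀ hv : v ∈ s,
      ∃ p : (T.induce s).Walk ⟨u, hus⟩ ⟨v, hv⟩, p.length = T.dist u v := by
    intro v hv
    induction hv with
    | root => intro _; exact ⟨SimpleGraph.Walk.nil, by simp [SimpleGraph.dist_self]⟩
    | @child v' w' hv' hw' ih =>
      intro hws
      obtain ⟨hchild, -⟩ := chChoice_spec hw'
      obtain ⟨p, hp⟩ := ih hv'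
      have hadj : (T.induce s).Adj ⟨v', hv'⟩ ⟨w', hws⟩ := hchild.1
      exact ⟨p.concat hadj, by
        rw [SimpleGraph.Walk.length_concat, hp, hchild.2]⟩
  let valHom : T.induce s →g T := ⟨Subtype.val, fun {a b} h => h⟩
  have distEq : ∀ v : ↥s, (T.induce s).dist ⟨u, hus⟩ v = T.dist u ↑v := by
    rintro ⟨v, hv⟩
    obtain ⟨p, hp⟩ := key v hv hv
    refine le_antisymm (by rw [← hp]; exact SimpleGraph.dist_le p) ?_
    obtain ⟨q, hq⟩ := (SimpleGraph.Walk.reachable p).exists_walk_length_eq_dist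
    have := SimpleGraph.dist_le (q.map valHom)
    rwa [SimpleGraph.Walk.length_map, hq] at this
  have hconn' : (T.induce s).Connected := by
    rw [SimpleGraph.connected_iff]
    refine ⟨fun a b => ?_, ⟨⟨u, hus⟩⟩⟩
    obtain ⟨p, -⟩ := key a.1 a.2 a.2
    obtain ⟨q, -⟩ := key b.1 b.2 b.2
    exact (SimpleGraph.Walk.reachable p).symm.trans (SimpleGraph.Walk.reachable q)
  have hacyc' : (T.induce s).IsAcyclic := by
    intro x cc hcc
    exact hacycT (cc.map valHom) (hcc.map Subtype.val_injective)
  have istree' : (T.induce s).IsTree := ⟨hconn', hacyc'⟩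
  have childIff : ∀ v w : ↥s,
      IsChild (T.induce s) ⟨u, hus⟩ v w ↔ IsChild T u ↑v ↑w := by
    intro v w
    unfold IsChild
    rw [distEq v, distEq w]
    exact Iff.rfl
  have inv : ∀ x, TMem Ch u x → x = u ∨ ∃ p, TMem Ch u p ∧ x ∈ Ch p := by
    intro x hx
    cases hx with
    | root => exact Or.inl rfl
    | child hp hw => exact Or.inr ⟨_, hp, hw⟩
  have hcount : ∀ v : ↥s, (T.induce s).dist ⟨u, hus⟩ v < ρ →
      {w : ↥s | IsChild (T.induce s) ⟨u, hus⟩ v w}.ncard = δ := by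
    intro v hv
    rw [distEq v] at hv
    have himg : Subtype.val '' {w : ↥s | IsChild (T.induce s) ⟨u, hus⟩ v w}
        = ↑(Ch ↑v) := by
      ext w
      constructor
      · rintro ⟨w', hw', rfl⟩
        have hchild : IsChild T u ↑v ↑w' := (childIff v w').1 hw'
        rcases inv ↑w' w'.2 with h | ⟨p, hp, hwp⟩
        · exfalso
          have h2 := hchild.2
          rw [h, SimpleGraph.dist_self] at h2
          omega
        · have hchild2 : IsChild T u p ↑w' := (chChoice_spec hwp).1
          have hvp : (v : α) = p := parent_unique T u ⟨hconnT, hacycT⟩ hchild hchild2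
          rw [hvp]
          exact hwp
      · intro hw
        simp only [Finset.coe_sort_coe, Finset.mem_coe] at hw
        have hchild := (chChoice_spec hw).1
        have hws : w ∈ s := TMem.child v.2 hw
        exact ⟨⟨w, hws⟩, (childIff v ⟨w, hws⟩).2 hchild, rfl⟩
    calc {w : ↥s | IsChild (T.induce s) ⟨u, hus⟩ v w}.ncard
        = (Subtype.val '' {w : ↥s | IsChild (T.induce s) ⟨u, hus⟩ v w}).ncard :=
          (Set.ncard_image_of_injective _ Subtype.val_injective).symm
      _ = (Ch ↑v).card := by rw [himg, Set.ncard_coe_finset]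
      _ = δ := hch_card _ hv
  refine ⟨c u, s, hus, ⟨istree', fun v w h => (childIff v w).1 h⟩,
    ⟨istree', fun v => by rw [distEq v]; exact hle _, hcount⟩,
    fun v hv => by rw [← distEq v]; exact hv,
    fun v hv => ?_⟩
  have hd : T.dist u ↑v = ρ := by rw [← distEq v]; exact hv
  rw [← hleaf _ hd]
  exact hmemcolor _ v.2
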